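/- For every positive integer n, K(n) ≡ (-1)^{n-1} · S(n-1) (mod n). -/

import Mathlib

/-- Kurepa's left factorial. -/
def K (n : ℕ) : ℕ := ∑ k ∈ Finset.range n, k.factorial

lemma asc_zmod (m : ℕ) : ∀ j, j ≤ m →
    ((Nat.ascFactorial (m + 1 - j) j : ℕ) : ZMod (m + 1)) =
      (-1) ^ j * (j.factorial : ZMod (m + 1)) := by
  intro j
  induction j with
  | zero => simp
  | succ j ih =>
    intro hj
    have hj' : j ≤ m := Nat.le_of_succ_le hj
    have h1 : m + 1 - (j + 1) = m - j := by omega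
    have h2 : m - j + 1 = m + 1 - j := by omega
    have key : Nat.ascFactorial (m + 1 - (j + 1)) (j + 1) =
        (m - j) * Nat.ascFactorial (m + 1 - j) j := by
      rw [h1, ← h2, Nat.succ_ascFactorial, Nat.ascFactorial_succ]
    rw [key]
    push_cast
    rw [ih hj']
    have hmj : ((m - j : ℕ) : ZMod (m + 1)) = -(j + 1 : ZMod (m + 1)) := by
      have : ((m - j : ℕ) : ZMod (m + 1)) + (j + 1 : ZMod (m + 1)) = 0 := by
        have : ((m - j : ℕ) : ZMod (m + 1)) + ((j + 1 : ℕ) : ZMod (m + 1)) =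
            ((m + 1 : ℕ) : ZMod (m + 1)) := by
          rw [← Nat.cast_add]
          congr 1
          omega
        simpa using this
      linear_combination this
    rw [hmj, Nat.factorial_succ]
    push_cast
    ring

theorem kurepa_subfactorial_congr (n : ℕ) (hn : 0 < n) :
    (K n : ℤ) ≡ (-1) ^ (n - 1) * numDerangements (n - 1) [ZMOD n] := by
  obtain ⟨m, rfl⟩ : ∃ m, n = m + 1 := ⟨n - 1, by omega⟩
  simp only [Nat.add_sub_cancel]
  rw [← ZMod.intCast_eq_intCast_iff]
  rw [numDerangements_sum]
  push_cast [K]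
  rw [Finset.mul_sum]
  have hterm : ∀ k ∈ Finset.range (m + 1),
      (-1 : ZMod (m + 1)) ^ m * ((-1) ^ k * (Nat.ascFactorial (k + 1) (m - k) : ZMod (m + 1))) =
        ((m - k).factorial : ZMod (m + 1)) := by
    intro k hk
    have hk' : k ≤ m := Nat.lt_succ_iff.mp (Finset.mem_range.mp hk)
    have h1 : k + 1 = m + 1 - (m - k) := by omega
    rw [h1, asc_zmod m (m - k) (by omega)]
    rw [← mul_assoc, ← mul_assoc, ← pow_add, ← pow_add]
    have : m + k + (m - k) = m + m := by omega
    rw [this, Even.neg_one_pow ⟨m, rfl⟩, one_mul]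
  rw [Finset.sum_congr rfl hterm]
  have := Finset.sum_range_reflect (fun j => ((j.factorial : ℕ) : ZMod (m + 1))) (m + 1)
  simp only [Nat.add_sub_cancel] at this
  rw [this]
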